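/- Facets are inherited by Minkowski combinations: if f is a facet of the compact convex set K₁ at k₁ ∈ K₁ (with p₁ > 0), and K₂,…,K_J are nonempty compact convex sets with weights p_j > 0 summing with p₁ to 1, then f is a facet of Σ_j p_j K_j at the point p₁k₁ + Σ_{j≥2} p_j k_j, where each k_j ∈ argmax_{K_j} f. -/

import Mathlib

open scoped Pointwise

theorem facet_inherited_by_minkowski_combination
    {n J : ℕ} (hJ : 0 < J) (K : Fin J → Set (EuclideanSpace ℝ (Fin n)))
    (hKne : ∀ j, (K j).Nonempty) (hKc : ∀ j, IsCompact (K j))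
    (hKconv : ∀ j, Convex ℝ (K j))
    (p : Fin J → ℝ) (hp : ∀ j, 0 < p j) (hpsum : ∑ j, p j = 1)
    (f : EuclideanSpace ℝ (Fin n) →ₗ[ℝ] ℝ) (hf : f ≠ 0)
    (k : Fin J → EuclideanSpace ℝ (Fin n))
    (hk0 : k ⟨0, hJ⟩ ∈ K ⟨0, hJ⟩)
    (d : EuclideanSpace ℝ (Fin n))
    (hfacet : ∃ U ∈ nhds (k ⟨0, hJ⟩), ∀ x ∈ U,
      x - f (x - k ⟨0, hJ⟩) • d ∈ {y ∈ K ⟨0, hJ⟩ | ∀ y' ∈ K ⟨0, hJ⟩, f y' ≤ f y})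
    (hkj : ∀ j : Fin J, j ≠ ⟨0, hJ⟩ → k j ∈ {y ∈ K j | ∀ y' ∈ K j, f y' ≤ f y}) :
    ∃ d' : EuclideanSpace ℝ (Fin n), ∃ U ∈ nhds (∑ j, p j • k j), ∀ x ∈ U,
      x - f (x - ∑ j, p j • k j) • d' ∈
        {y ∈ ∑ j, p j • K j | ∀ y' ∈ ∑ j, p j • K j, f y' ≤ f y} := by
  classical
  set i0 : Fin J := ⟨0, hJ⟩
  obtain ⟨U, hU, hUmax⟩ := hfacet
  set s : EuclideanSpace ℝ (Fin n) := ∑ j ∈ Finset.univ.erase i0, p j • k j with hs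
  have hsumsplit : (∑ j, p j • k j) = p i0 • k i0 + s := by
    rw [hs, ← Finset.add_sum_erase _ _ (Finset.mem_univ i0)]
  have hp0 : p i0 ≠ 0 := (hp i0).ne'
  -- the rescaling map
  set g : EuclideanSpace ℝ (Fin n) → EuclideanSpace ℝ (Fin n) :=
    fun x => (p i0)⁻¹ • (x - s) with hg
  have hgcont : Continuous g := by
    have := (continuous_id.sub (continuous_const (y := s))).const_smul (p i0)⁻¹
    exact this
  have hgk : g (∑ j, p j • k j) = k i0 := by
    rw [hg]; simp only [hsumsplit]
    rw [add_sub_cancel_right, smul_smul, inv_mul_cancel₀ hp0, one_smul]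
  refine ⟨d, g ⁻¹' U, hgcont.continuousAt.preimage_mem_nhds (by rwa [hgk]), ?_⟩
  intro x hx
  set z := g x with hz
  have hxz : x = p i0 • z + s := by
    rw [hz, hg]; simp only []
    rw [smul_smul, mul_inv_cancel₀ hp0, one_smul, sub_add_cancel]
  obtain ⟨hwK, hwmax⟩ := hUmax z hx
  set w := z - f (z - k i0) • d with hw
  -- the key algebraic identity
  have hfx : f (x - ∑ j, p j • k j) = p i0 * f (z - k i0) := by
    rw [hxz, hsumsplit]
    have : p i0 • z + s - (p i0 • k i0 + s) = p i0 • (z - k i0) := by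
      rw [smul_sub]; abel
    rw [this, map_smul, smul_eq_mul]
  have hkey : x - f (x - ∑ j, p j • k j) • d = p i0 • w + s := by
    rw [hfx, hxz, hw, smul_sub, mul_smul]
    abel
  -- candidate points
  set y : Fin J → EuclideanSpace ℝ (Fin n) := fun j => if j = i0 then w else k j with hy
  have hyK : ∀ j, y j ∈ K j := by
    intro j
    by_cases h : j = i0
    · subst h; simp only [hy, if_pos rfl]; exact hwK
    · simp only [hy, if_neg h]; exact (hkj j h).1
  have hsumy : (∑ j, p j • y j) = p i0 • w + s := by
    rw [← Finset.add_sum_erase _ _ (Finset.mem_univ i0)]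
    have h1 : p i0 • y i0 = p i0 • w := by simp [hy]
    have h2 : ∑ j ∈ Finset.univ.erase i0, p j • y j = s := by
      rw [hs]
      apply Finset.sum_congr rfl
      intro j hj
      rw [hy]; simp only [if_neg (Finset.ne_of_mem_erase hj)]
    rw [h1, h2]
  constructor
  · rw [hkey, ← hsumy]
    exact Set.finset_sum_mem_finset_sum _ _ _
      (fun j _ => Set.smul_mem_smul_set (hyK j))
  · intro y' hy'
    rw [Set.mem_fintype_sum] at hy'
    obtain ⟨gfun, hgmem, hgsum⟩ := hy'
    have : ∀ j, ∃ v ∈ K j, gfun j = p j • v := by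
      intro j
      obtain ⟨v, hv, hveq⟩ := hgmem j
      exact ⟨v, hv, hveq.symm⟩
    choose v hv hveq using this
    have hfy' : f y' = ∑ j, p j * f (v j) := by
      rw [← hgsum, map_sum]
      apply Finset.sum_congr rfl
      intro j _
      rw [hveq j, map_smul, smul_eq_mul]
    have hfyy : f (x - f (x - ∑ j, p j • k j) • d) = ∑ j, p j * f (y j) := by
      rw [hkey, ← hsumy, map_sum]
      apply Finset.sum_congr rfl
      intro j _
      rw [map_smul, smul_eq_mul]
    rw [hfy', hfyy]
    apply Finset.sum_le_sum
    intro j _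
    apply mul_le_mul_of_nonneg_left _ (hp j).le
    by_cases h : j = i0
    · subst h; simp only [hy, if_pos rfl]; exact hwmax _ (hv _)
    · simp only [hy, if_neg h]; exact (hkj j h).2 _ (hv j)
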